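/- arXiv:1608.03301 — 7 statements merged into one kernel-verified Lean document; each statement's English description precedes it below -/
import Mathlib

section
/- Let X and Y be n×n Hermitian positive semidefinite matrices and α, β > 0 with βY ≤ X ≤ αY in the Löwner order. Then for every Schatten p-norm (1 ≤ p ≤ ∞), ‖X - Y‖_p ≤ max(|α - 1|, |β - 1|)·‖Y‖_p. -/
open Matrix ENNReal
open scoped ComplexOrder InnerProductSpace

section Aux

variable {n : ℕ}

private lemma quad_expand {Y : Matrix (Fin n) (Fin n) ℂ} (hY : Y.IsHermitian)
    (w : EuclideanSpace ℂ (Fin n)) :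
    RCLike.re (dotProduct (star ⇑w) (Y *ᵥ ⇑w)) =
      ∑ j, hY.eigenvalues j * ‖⟪hY.eigenvectorBasis j, w⟫_ℂ‖ ^ 2 := by
  set u := hY.eigenvectorBasis with hu
  have key : ∀ j, dotProduct (star ⇑(u j)) (Y *ᵥ ⇑w)
      = (hY.eigenvalues j : ℂ) * ⟪u j, w⟫_ℂ := by
    intro j
    rw [Matrix.dotProduct_mulVec]
    conv_lhs => rw [← hY.eq]
    rw [← Matrix.star_mulVec, hY.mulVec_eigenvectorBasis]
    rw [show ⟪u j, w⟫_ℂ = dotProduct (star ⇑(u j)) ⇑w from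
      (EuclideanSpace.inner_eq_star_dotProduct _ _).trans (dotProduct_comm _ _)]
    simp [star_smul, RCLike.real_smul_eq_coe_mul, smul_dotProduct]
    exact Or.inl rfl
  have expand : dotProduct (star ⇑w) (Y *ᵥ ⇑w)
      = ((∑ j, hY.eigenvalues j * ‖⟪u j, w⟫_ℂ‖ ^ 2 : ℝ) : ℂ) := by
    have h1 : dotProduct (star ⇑w) (Y *ᵥ ⇑w)
        = ∑ j, ⟪w, u j⟫_ℂ * dotProduct (star ⇑(u j)) (Y *ᵥ ⇑w) := by
      set z : EuclideanSpace ℂ (Fin n) := (WithLp.equiv 2 _).symm (Y *ᵥ ⇑w) with hz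
      have hzc : ⇑z = Y *ᵥ ⇑w := rfl
      rw [← hzc]
      rw [show dotProduct (star ⇑w) ⇑z = ⟪w, z⟫_ℂ from
        ((EuclideanSpace.inner_eq_star_dotProduct _ _).trans (dotProduct_comm _ _)).symm]
      rw [← u.sum_inner_mul_inner w z]
      exact Finset.sum_congr rfl fun j _ => by
        simp only [EuclideanSpace.inner_eq_star_dotProduct]
        rw [dotProduct_comm (WithLp.ofLp z)]
    rw [h1, Complex.ofReal_sum]
    congr 1; funext j
    rw [key j]
    rw [show ⟪w, u j⟫_ℂ = starRingEnd ℂ ⟪u j, w⟫_ℂ from (inner_conj_symm _ _).symm]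
    rw [show (starRingEnd ℂ) ⟪u j, w⟫_ℂ * ((hY.eigenvalues j : ℂ) * ⟪u j, w⟫_ℂ)
      = (hY.eigenvalues j : ℂ) * ((starRingEnd ℂ) ⟪u j, w⟫_ℂ * ⟪u j, w⟫_ℂ) from by ring,
      RCLike.conj_mul]
    push_cast; rfl
  rw [expand]; exact Complex.ofReal_re _

private lemma parseval' {E : Type*} [NormedAddCommGroup E] [InnerProductSpace ℂ E]
    (b : OrthonormalBasis (Fin n) ℂ E) (x : E) :
    ∑ i, ‖⟪b i, x⟫_ℂ‖ ^ 2 = ‖x‖ ^ 2 := by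
  have h := congrArg RCLike.re (b.sum_inner_mul_inner x x)
  rw [inner_self_eq_norm_sq, map_sum] at h
  rw [← h]
  refine Finset.sum_congr rfl fun i _ => ?_
  rw [← inner_conj_symm x (b i), RCLike.conj_mul, ← RCLike.ofReal_pow, RCLike.ofReal_re]

private lemma abs_le_quad {M Y : Matrix (Fin n) (Fin n) ℂ} (hM : M.IsHermitian)
    {c : ℝ} (h1 : (c • Y - M).PosSemidef) (h2 : (c • Y + M).PosSemidef)
    (i : Fin n) :
    |hM.eigenvalues i| ≤ c * RCLike.re (dotProduct (star ⇑(hM.eigenvectorBasis i))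
      (Y *ᵥ ⇑(hM.eigenvectorBasis i))) := by
  set v := ⇑(hM.eigenvectorBasis i)
  have hre : ∀ (A : Matrix (Fin n) (Fin n) ℂ), A.PosSemidef →
      0 ≤ RCLike.re (dotProduct (star v) (A *ᵥ v)) :=
    fun A hA => hA.re_dotProduct_nonneg v
  have lin : ∀ (s : ℝ) (A B : Matrix (Fin n) (Fin n) ℂ),
      RCLike.re (dotProduct (star v) ((s • A + B) *ᵥ v))
      = s * RCLike.re (dotProduct (star v) (A *ᵥ v))
        + RCLike.re (dotProduct (star v) (B *ᵥ v)) := by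
    intro s A B
    rw [Matrix.add_mulVec, dotProduct_add, map_add, Matrix.smul_mulVec,
      dotProduct_smul]
    congr 1
    rw [RCLike.smul_re]
  have h1' := hre _ h1
  have h2' := hre _ h2
  rw [show c • Y - M = c • Y + (-1 : ℝ) • M by module] at h1'
  rw [show c • Y + M = c • Y + (1 : ℝ) • M by module] at h2'
  rw [lin] at h1' h2'
  have hsmul : ∀ (s : ℝ), RCLike.re (dotProduct (star v) ((s • M) *ᵥ v))
      = s * RCLike.re (dotProduct (star v) (M *ᵥ v)) := by
    intro s
    rw [Matrix.smul_mulVec, dotProduct_smul, RCLike.smul_re]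
  rw [hsmul] at h1' h2'
  have he := hM.eigenvalues_eq i
  rw [abs_le]
  constructor <;> [nlinarith [h2']; nlinarith [h1']]

private lemma main_sum {M Y : Matrix (Fin n) (Fin n) ℂ} (hM : M.IsHermitian) (hY : Y.PosSemidef)
    {c : ℝ} (hc : 0 ≤ c) (h1 : (c • Y - M).PosSemidef) (h2 : (c • Y + M).PosSemidef)
    {q : ℝ} (hq : 1 ≤ q) :
    ∑ i, |hM.eigenvalues i| ^ q ≤ c ^ q * ∑ j, |hY.1.eigenvalues j| ^ q := by
  have hq0 : (0:ℝ) ≤ q := le_trans zero_le_one hq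
  set v := hM.eigenvectorBasis with hv
  set u := hY.1.eigenvectorBasis with hu
  set lam := hY.1.eigenvalues with hlam
  set D : Fin n → Fin n → ℝ := fun i j => ‖⟪u j, v i⟫_ℂ‖ ^ 2 with hD
  have hD0 : ∀ i j, 0 ≤ D i j := fun i j => sq_nonneg _
  have row : ∀ i, ∑ j, D i j = 1 := by
    intro i
    rw [hD]
    simp only
    rw [parseval' u (v i), v.orthonormal.1 i, one_pow]
  have col : ∀ j, ∑ i, D i j = 1 := by
    intro j
    have : ∀ i, D i j = ‖⟪v i, u j⟫_ℂ‖ ^ 2 := fun i => by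
      rw [hD]; simp only; rw [norm_inner_symm]
    simp_rw [this]
    rw [parseval' v (u j), u.orthonormal.1 j, one_pow]
  set Q : Fin n → ℝ := fun i =>
    RCLike.re (dotProduct (star ⇑(v i)) (Y *ᵥ ⇑(v i))) with hQdef
  have hQ : ∀ i, Q i = ∑ j, lam j * D i j := fun i => quad_expand hY.1 (v i)
  have hQ0 : ∀ i, 0 ≤ Q i := fun i => hY.re_dotProduct_nonneg _
  have hlam0 : ∀ j, 0 ≤ lam j := fun j => hY.eigenvalues_nonneg j
  have jensen : ∀ i, Q i ^ q ≤ ∑ j, D i j * lam j ^ q := by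
    intro i
    have hcx := (convexOn_rpow hq).map_sum_le (t := Finset.univ)
      (w := fun j => D i j) (p := fun j => lam j) (fun j _ => hD0 i j)
      (row i) (fun j _ => hlam0 j)
    simp only [smul_eq_mul] at hcx
    rw [hQ i]
    simpa [mul_comm] using hcx
  calc ∑ i, |hM.eigenvalues i| ^ q
      ≤ ∑ i, (c * Q i) ^ q := by
        refine Finset.sum_le_sum fun i _ => ?_
        exact Real.rpow_le_rpow (abs_nonneg _) (abs_le_quad hM h1 h2 i) hq0
    _ = ∑ i, c ^ q * Q i ^ q := by
        refine Finset.sum_congr rfl fun i _ => ?_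
        rw [Real.mul_rpow hc (hQ0 i)]
    _ ≤ ∑ i, c ^ q * ∑ j, D i j * lam j ^ q := by
        refine Finset.sum_le_sum fun i _ => ?_
        exact mul_le_mul_of_nonneg_left (jensen i) (Real.rpow_nonneg hc q)
    _ = c ^ q * ∑ j, (∑ i, D i j) * lam j ^ q := by
        rw [← Finset.mul_sum]
        congr 1
        rw [Finset.sum_comm]
        exact Finset.sum_congr rfl fun j _ => by rw [Finset.sum_mul]
    _ = c ^ q * ∑ j, |lam j| ^ q := by
        congr 1
        exact Finset.sum_congr rfl fun j _ => by
          rw [col j, one_mul, abs_of_nonneg (hlam0 j)]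

private lemma main_sup {M Y : Matrix (Fin n) (Fin n) ℂ} (hM : M.IsHermitian) (hY : Y.PosSemidef)
    {c : ℝ} (hc : 0 ≤ c) (h1 : (c • Y - M).PosSemidef) (h2 : (c • Y + M).PosSemidef) :
    ⨆ i, |hM.eigenvalues i| ≤ c * ⨆ j, |hY.1.eigenvalues j| := by
  rcases Nat.eq_zero_or_pos n with rfl | hn
  · haveI : IsEmpty (Fin 0) := inferInstance
    rw [Real.iSup_of_isEmpty, Real.iSup_of_isEmpty, mul_zero]
  · haveI : Nonempty (Fin n) := Fin.pos_iff_nonempty.mp hn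
    set lam := hY.1.eigenvalues with hlam
    set S := ⨆ j, |lam j| with hS
    have hbdd : BddAbove (Set.range fun j => |lam j|) :=
      Set.Finite.bddAbove (Set.finite_range _)
    have hSle : ∀ j, lam j ≤ S := fun j =>
      le_trans (le_abs_self _) (le_ciSup hbdd j)
    refine ciSup_le fun i => ?_
    have key := abs_le_quad hM h1 h2 i
    have hQ := quad_expand hY.1 (hM.eigenvectorBasis i)
    set u := hY.1.eigenvectorBasis with hu
    have row : ∑ j, ‖⟪u j, hM.eigenvectorBasis i⟫_ℂ‖ ^ 2 = 1 := by
      rw [parseval' u _, hM.eigenvectorBasis.orthonormal.1 i, one_pow]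
    have hQle : RCLike.re (dotProduct (star ⇑(hM.eigenvectorBasis i))
        (Y *ᵥ ⇑(hM.eigenvectorBasis i))) ≤ S := by
      rw [hQ]
      calc ∑ j, lam j * ‖⟪u j, hM.eigenvectorBasis i⟫_ℂ‖ ^ 2
          ≤ ∑ j, S * ‖⟪u j, hM.eigenvectorBasis i⟫_ℂ‖ ^ 2 :=
            Finset.sum_le_sum fun j _ => mul_le_mul_of_nonneg_right (hSle j) (sq_nonneg _)
        _ = S := by rw [← Finset.mul_sum, row, mul_one]
    exact le_trans key (mul_le_mul_of_nonneg_left hQle hc)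

private lemma smul_psd {Y : Matrix (Fin n) (Fin n) ℂ} (hY : Y.PosSemidef) {r : ℝ} (hr : 0 ≤ r) :
    (r • Y).PosSemidef := by
  constructor
  · show (r • Y)ᴴ = r • Y
    rw [Matrix.conjTranspose_smul, star_trivial, hY.1.eq]
  · intro x
    exact (hY.smul hr).2 x

end Aux

/-- The Schatten p-norm of a Hermitian matrix, via the absolute values of its eigenvalues,
including the p = ∞ (spectral norm) case. -/
noncomputable def schattenNorm {n : ℕ} {A : Matrix (Fin n) (Fin n) ℂ} (hA : A.IsHermitian)
    (p : ℝ≥0∞) : ℝ :=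
  if p = ⊤ then ⨆ i, |hA.eigenvalues i|
  else (∑ i, |hA.eigenvalues i| ^ p.toReal) ^ (1 / p.toReal)

theorem stmt3 {n : ℕ} {X Y : Matrix (Fin n) (Fin n) ℂ}
    (hX : X.PosSemidef) (hY : Y.PosSemidef) (α β : ℝ) (hα : 0 < α) (hβ : 0 < β)
    (h₁ : (α • Y - X).PosSemidef) (h₂ : (X - β • Y).PosSemidef)
    (p : ℝ≥0∞) (hp : 1 ≤ p) :
    schattenNorm (hX.isHermitian.sub hY.isHermitian) p ≤
      max |α - 1| |β - 1| * schattenNorm hY.isHermitian p := by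
  set c := max |α - 1| |β - 1| with hcdef
  have hc : 0 ≤ c := le_trans (abs_nonneg _) (le_max_left _ _)
  set M := X - Y with hMdef
  have hM : M.IsHermitian := hX.isHermitian.sub hY.isHermitian
  have h1' : (c • Y - M).PosSemidef := by
    have e1 : c • Y - M = (c - (α - 1)) • Y + (α • Y - X) := by
      rw [hMdef]; module
    rw [e1]
    exact (smul_psd hY (by
      have : α - 1 ≤ c := le_trans (le_abs_self _) (le_max_left _ _)
      linarith)).add h₁
  have h2' : (c • Y + M).PosSemidef := by
    have e2 : c • Y + M = (c - (1 - β)) • Y + (X - β • Y) := by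
      rw [hMdef]; module
    rw [e2]
    exact (smul_psd hY (by
      have : 1 - β ≤ c := le_trans (by rw [abs_sub_comm]; exact le_abs_self _)
        (le_max_right _ _)
      linarith)).add h₂
  by_cases hptop : p = ⊤
  · simp only [schattenNorm, if_pos hptop]
    exact main_sup hM hY hc h1' h2'
  · simp only [schattenNorm, if_neg hptop]
    set q := p.toReal with hqdef
    have hq : 1 ≤ q := by
      rw [hqdef, ← ENNReal.toReal_one]
      exact ENNReal.toReal_mono hptop hp
    have hq0 : (0:ℝ) < q := lt_of_lt_of_le one_pos hq
    have key := main_sum hM hY hc h1' h2' hq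
    have hsumY : (0:ℝ) ≤ ∑ j, |hY.isHermitian.eigenvalues j| ^ q :=
      Finset.sum_nonneg fun j _ => Real.rpow_nonneg (abs_nonneg _) q
    calc (∑ i, |hM.eigenvalues i| ^ q) ^ (1/q)
        ≤ (c ^ q * ∑ j, |hY.isHermitian.eigenvalues j| ^ q) ^ (1/q) := by
          refine Real.rpow_le_rpow (Finset.sum_nonneg fun i _ =>
            Real.rpow_nonneg (abs_nonneg _) q) key (by positivity)
      _ = c * (∑ j, |hY.isHermitian.eigenvalues j| ^ q) ^ (1/q) := by
          rw [Real.mul_rpow (Real.rpow_nonneg hc q) hsumY, ← Real.rpow_mul hc,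
            mul_one_div_cancel (ne_of_gt hq0), Real.rpow_one]
end

section
/- Let X and Y be n×n Hermitian positive semidefinite matrices and α, β > 0 with βY ≤ X ≤ αY in the Löwner order. Then for every Schatten p-norm, ‖X - Y‖_p ≤ min{ max(|α-1|, |β-1|)·‖Y‖_p , max(|1/α - 1|, |1/β - 1|)·‖X‖_p }. -/
open Matrix ENNReal
open scoped ComplexOrder

namespace SchattenAux

lemma smul_posSemidef {n : ℕ} {Y : Matrix (Fin n) (Fin n) ℂ} (hY : Y.PosSemidef)
    {c : ℝ} (hc : 0 ≤ c) : (c • Y).PosSemidef := by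
  refine Matrix.PosSemidef.of_dotProduct_mulVec_nonneg ?_ fun x => ?_
  · have h := hY.1
    unfold Matrix.IsHermitian at h ⊢
    rw [Matrix.conjTranspose_smul, h, star_trivial]
  · rw [Matrix.smul_mulVec, dotProduct_smul, Complex.real_smul]
    exact mul_nonneg (Complex.zero_le_real.mpr hc) (hY.dotProduct_mulVec_nonneg x)

lemma diag_nonneg {n : ℕ} {M : Matrix (Fin n) (Fin n) ℂ} (hM : M.PosSemidef) (i : Fin n) :
    0 ≤ M i i := by
  have h := hM.dotProduct_mulVec_nonneg (Pi.single i 1)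
  rw [Matrix.mulVec_single] at h
  simpa [dotProduct, Pi.single_apply, apply_ite, Finset.sum_ite_eq] using h

lemma key {n : ℕ} {A Y : Matrix (Fin n) (Fin n) ℂ} (hA : A.IsHermitian) (hY : Y.PosSemidef)
    {c : ℝ} (hc : 0 ≤ c) (h1 : (c • Y - A).PosSemidef) (h2 : (c • Y + A).PosSemidef)
    (p : ℝ≥0∞) (hp : 1 ≤ p) :
    schattenNorm hA p ≤ c * schattenNorm hY.1 p := by
  classical
  set V : Matrix (Fin n) (Fin n) ℂ := (hA.eigenvectorUnitary : Matrix (Fin n) (Fin n) ℂ) with hV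
  set W : Matrix (Fin n) (Fin n) ℂ := (hY.1.eigenvectorUnitary : Matrix (Fin n) (Fin n) ℂ) with hW
  set N : Matrix (Fin n) (Fin n) ℂ := star W * V with hNdef
  set lam := hA.eigenvalues with hlam
  set mu := hY.1.eigenvalues with hmu
  set q : Fin n → Fin n → ℝ := fun j i => Complex.normSq (N j i) with hqdef
  have hμ0 : ∀ j, 0 ≤ mu j := hY.eigenvalues_nonneg
  have hq0 : ∀ j i, 0 ≤ q j i := fun j i => Complex.normSq_nonneg _
  -- unitary facts
  have hVV : star V * V = 1 := Unitary.coe_star_mul_self hA.eigenvectorUnitary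
  have hVV' : V * star V = 1 := Unitary.coe_mul_star_self hA.eigenvectorUnitary
  have hWW : star W * W = 1 := Unitary.coe_star_mul_self hY.1.eigenvectorUnitary
  have hWW' : W * star W = 1 := Unitary.coe_mul_star_self hY.1.eigenvectorUnitary
  have hN1 : star N * N = 1 := by
    calc star N * N = star V * (W * star W) * V := by
          simp only [hNdef, StarMul.star_mul, star_star, Matrix.mul_assoc]
      _ = 1 := by rw [hWW', mul_one, hVV]
  have hN2 : N * star N = 1 := by
    calc N * star N = star W * (V * star V) * W := by
          simp only [hNdef, StarMul.star_mul, star_star, Matrix.mul_assoc]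
      _ = 1 := by rw [hVV', mul_one, hWW]
  -- column sums of q are 1
  have hcol : ∀ i, ∑ j, q j i = 1 := by
    intro i
    have h := congrFun (congrFun hN1 i) i
    rw [Matrix.mul_apply, Matrix.one_apply_eq] at h
    have h' : (((∑ j, q j i : ℝ)) : ℂ) = 1 := by
      rw [← h, Complex.ofReal_sum]
      refine Finset.sum_congr rfl fun j _ => ?_
      rw [Matrix.star_apply, hqdef]
      exact Complex.normSq_eq_conj_mul_self
    exact_mod_cast h'
  -- row sums of q are 1
  have hrow : ∀ j, ∑ i, q j i = 1 := by
    intro j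
    have h := congrFun (congrFun hN2 j) j
    rw [Matrix.mul_apply, Matrix.one_apply_eq] at h
    have h' : (((∑ i, q j i : ℝ)) : ℂ) = 1 := by
      rw [← h, Complex.ofReal_sum]
      refine Finset.sum_congr rfl fun i _ => ?_
      rw [Matrix.star_apply, hqdef]
      exact (Complex.mul_conj _).symm
    exact_mod_cast h'
  -- diagonalizations
  have hAd : star V * A * V = Matrix.diagonal (Complex.ofReal ∘ lam) :=
    by have := hA.conjStarAlgAut_star_eigenvectorUnitary; rw [Unitary.conjStarAlgAut_apply] at this; simpa using this
  have hYd : star V * Y * V = star N * Matrix.diagonal (Complex.ofReal ∘ mu) * N := by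
    conv_lhs => rw [hY.1.spectral_theorem, Unitary.conjStarAlgAut_apply]
    simp only [hNdef, StarMul.star_mul, star_star, Matrix.mul_assoc]
    rfl
  set r : Fin n → ℝ := fun i => ∑ j, mu j * q j i with hrdef
  have hr0 : ∀ i, 0 ≤ r i := fun i =>
    Finset.sum_nonneg fun j _ => mul_nonneg (hμ0 j) (hq0 j i)
  have hYentry : ∀ i, (star V * Y * V) i i = ((r i : ℝ) : ℂ) := by
    intro i
    rw [hYd, Matrix.mul_apply]
    rw [hrdef, Complex.ofReal_sum]
    refine Finset.sum_congr rfl fun j _ => ?_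
    rw [Matrix.mul_diagonal, Matrix.star_apply]
    have : star (N j i) * (Complex.ofReal ∘ mu) j * N j i
        = ((mu j : ℂ)) * ((starRingEnd ℂ) (N j i) * N j i) := by
      rw [Function.comp_apply, Complex.star_def]; ring
    rw [this, ← Complex.normSq_eq_conj_mul_self]
    push_cast
    ring
  -- the key pointwise inequality
  have habs : ∀ i, |lam i| ≤ c * r i := by
    intro i
    have expand : ∀ (M : Matrix (Fin n) (Fin n) ℂ), star V * M * V = Vᴴ * M * V := by
      intro M; rw [Matrix.star_eq_conjTranspose]
    have H1 := diag_nonneg (h1.conjTranspose_mul_mul_same V) i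
    have H2 := diag_nonneg (h2.conjTranspose_mul_mul_same V) i
    have e1 : Vᴴ * (c • Y - A) * V = c • (star V * Y * V) - star V * A * V := by
      rw [← expand]
      simp only [Matrix.mul_sub, Matrix.sub_mul, Matrix.mul_smul, Matrix.smul_mul]
    have e2 : Vᴴ * (c • Y + A) * V = c • (star V * Y * V) + star V * A * V := by
      rw [← expand]
      simp only [Matrix.mul_add, Matrix.add_mul, Matrix.mul_smul, Matrix.smul_mul]
    rw [e1] at H1
    rw [e2] at H2
    have hAe : (star V * A * V) i i = ((lam i : ℝ) : ℂ) := by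
      rw [hAd]; simp [Matrix.diagonal_apply_eq]
    have E1 : (c • (star V * Y * V) - star V * A * V) i i = ((c * r i - lam i : ℝ) : ℂ) := by
      simp only [Matrix.sub_apply, Matrix.smul_apply, hYentry i, hAe, Complex.real_smul]
      push_cast; ring
    have E2 : (c • (star V * Y * V) + star V * A * V) i i = ((c * r i + lam i : ℝ) : ℂ) := by
      simp only [Matrix.add_apply, Matrix.smul_apply, hYentry i, hAe, Complex.real_smul]
      push_cast; ring
    rw [E1] at H1
    rw [E2] at H2
    have h1' : 0 ≤ c * r i - lam i := Complex.zero_le_real.mp H1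
    have h2' : 0 ≤ c * r i + lam i := Complex.zero_le_real.mp H2
    exact abs_le.mpr ⟨by linarith, by linarith⟩
  -- now split the cases
  unfold schattenNorm
  rcases eq_or_ne p ⊤ with hptop | hptop
  · subst hptop
    simp only [if_pos rfl]
    rcases Nat.eq_zero_or_pos n with hn | hn
    · subst hn
      simp [Real.iSup_of_isEmpty]
    · have : (0 : ℕ) < n := hn
      haveI : Nonempty (Fin n) := ⟨⟨0, hn⟩⟩
      refine ciSup_le fun i => (habs i).trans ?_
      have hSbd : ∀ j, mu j ≤ ⨆ j', |mu j'| := fun j =>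
        (le_abs_self _).trans (le_ciSup (f := fun j' => |mu j'|) (Set.Finite.bddAbove (Set.finite_range _)) j)
      have : r i ≤ ⨆ j', |mu j'| := by
        calc r i ≤ ∑ j, (⨆ j', |mu j'|) * q j i :=
              Finset.sum_le_sum fun j _ => mul_le_mul_of_nonneg_right (hSbd j) (hq0 j i)
          _ = (⨆ j', |mu j'|) * ∑ j, q j i := by rw [Finset.mul_sum]
          _ = ⨆ j', |mu j'| := by rw [hcol i, mul_one]
      exact mul_le_mul_of_nonneg_left this hc
  · simp only [if_neg hptop]
    set p' := p.toReal with hp'def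
    have hp1 : 1 ≤ p' := by
      have := ENNReal.toReal_mono hptop hp
      simpa using this
    have hp0 : 0 < p' := lt_of_lt_of_le one_pos hp1
    -- Jensen
    have jensen : ∀ i, (r i) ^ p' ≤ ∑ j, q j i * (mu j) ^ p' := by
      intro i
      have h := (convexOn_rpow hp1).map_sum_le (t := Finset.univ) (w := fun j => q j i)
        (p := mu) (fun j _ => hq0 j i) (hcol i) (fun j _ => hμ0 j)
      simpa [hrdef, smul_eq_mul, mul_comm] using h
    have S1 : ∑ i, |lam i| ^ p' ≤ c ^ p' * ∑ j, |mu j| ^ p' := by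
      calc ∑ i, |lam i| ^ p'
          ≤ ∑ i, (c * r i) ^ p' :=
            Finset.sum_le_sum fun i _ =>
              Real.rpow_le_rpow (abs_nonneg _) (habs i) (le_of_lt hp0)
        _ = ∑ i, c ^ p' * (r i) ^ p' := by
            refine Finset.sum_congr rfl fun i _ => Real.mul_rpow hc (hr0 i)
        _ ≤ ∑ i, c ^ p' * ∑ j, q j i * (mu j) ^ p' :=
            Finset.sum_le_sum fun i _ =>
              mul_le_mul_of_nonneg_left (jensen i) (Real.rpow_nonneg hc _)
        _ = c ^ p' * ∑ i, ∑ j, q j i * (mu j) ^ p' := by rw [Finset.mul_sum]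
        _ = c ^ p' * ∑ j, ∑ i, q j i * (mu j) ^ p' := by rw [Finset.sum_comm]
        _ = c ^ p' * ∑ j, (mu j) ^ p' := by
            congr 1
            refine Finset.sum_congr rfl fun j _ => ?_
            rw [← Finset.sum_mul, hrow j, one_mul]
        _ = c ^ p' * ∑ j, |mu j| ^ p' := by
            congr 1
            exact Finset.sum_congr rfl fun j _ => by rw [abs_of_nonneg (hμ0 j)]
    have hL0 : 0 ≤ ∑ i, |lam i| ^ p' :=
      Finset.sum_nonneg fun i _ => Real.rpow_nonneg (abs_nonneg _) _
    have hM0 : 0 ≤ ∑ j, |mu j| ^ p' :=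
      Finset.sum_nonneg fun j _ => Real.rpow_nonneg (abs_nonneg _) _
    calc (∑ i, |lam i| ^ p') ^ (1 / p')
        ≤ (c ^ p' * ∑ j, |mu j| ^ p') ^ (1 / p') :=
          Real.rpow_le_rpow hL0 S1 (by positivity)
      _ = (c ^ p') ^ (1 / p') * (∑ j, |mu j| ^ p') ^ (1 / p') :=
          Real.mul_rpow (Real.rpow_nonneg hc _) hM0
      _ = c * (∑ j, |mu j| ^ p') ^ (1 / p') := by
          rw [← Real.rpow_mul hc, mul_one_div_cancel (ne_of_gt hp0), Real.rpow_one]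

end SchattenAux

theorem stmt4 {n : ℕ} {X Y : Matrix (Fin n) (Fin n) ℂ}
    (hX : X.PosSemidef) (hY : Y.PosSemidef) (α β : ℝ) (hα : 0 < α) (hβ : 0 < β)
    (h₁ : (α • Y - X).PosSemidef) (h₂ : (X - β • Y).PosSemidef)
    (p : ℝ≥0∞) (hp : 1 ≤ p) :
    schattenNorm (hX.isHermitian.sub hY.isHermitian) p ≤
      min (max |α - 1| |β - 1| * schattenNorm hY.isHermitian p)
        (max |1 / α - 1| |1 / β - 1| * schattenNorm hX.isHermitian p) := by
  have hc1 : (0:ℝ) ≤ max |α - 1| |β - 1| := le_trans (abs_nonneg _) (le_max_left _ _)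
  have hc2 : (0:ℝ) ≤ max |1 / α - 1| |1 / β - 1| := le_trans (abs_nonneg _) (le_max_left _ _)
  have hA : (X - Y).IsHermitian := hX.isHermitian.sub hY.isHermitian
  have key1 : schattenNorm hA p ≤ max |α - 1| |β - 1| * schattenNorm hY.isHermitian p := by
    refine SchattenAux.key hA hY hc1 ?_ ?_ p hp
    · have e : max |α - 1| |β - 1| • Y - (X - Y)
          = (α • Y - X) + (max |α - 1| |β - 1| + 1 - α) • Y := by module
      rw [e]
      exact h₁.add (SchattenAux.smul_posSemidef hY (by
        linarith [le_abs_self (α - 1), le_max_left |α - 1| |β - 1|]))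
    · have e : max |α - 1| |β - 1| • Y + (X - Y)
          = (X - β • Y) + (max |α - 1| |β - 1| - 1 + β) • Y := by module
      rw [e]
      exact h₂.add (SchattenAux.smul_posSemidef hY (by
        linarith [neg_abs_le (β - 1), le_max_right |α - 1| |β - 1|]))
  have key2 : schattenNorm hA p ≤ max |1 / α - 1| |1 / β - 1| * schattenNorm hX.isHermitian p := by
    refine SchattenAux.key hA hX hc2 ?_ ?_ p hp
    · have e : max |1 / α - 1| |1 / β - 1| • X - (X - Y)
          = (1 / α) • (α • Y - X) + (max |1 / α - 1| |1 / β - 1| + 1 / α - 1) • X := by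
        match_scalars <;> field_simp <;> ring
      rw [e]
      exact (SchattenAux.smul_posSemidef h₁ (by positivity)).add
        (SchattenAux.smul_posSemidef hX (by
          linarith [neg_abs_le (1 / α - 1), le_max_left |1 / α - 1| |1 / β - 1|]))
    · have e : max |1 / α - 1| |1 / β - 1| • X + (X - Y)
          = (1 / β) • (X - β • Y) + (max |1 / α - 1| |1 / β - 1| + 1 - 1 / β) • X := by
        match_scalars <;> field_simp <;> ring
      rw [e]
      exact (SchattenAux.smul_posSemidef h₂ (by positivity)).add
        (SchattenAux.smul_posSemidef hX (by
          linarith [le_abs_self (1 / β - 1), le_max_right |1 / α - 1| |1 / β - 1|]))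
  exact le_min key1 key2
end

section
/- Let X and Y be n×n positive definite Hermitian matrices with X ≤ e^d Y and Y ≤ e^d X in the Löwner order for some d ≥ 0. Then for every 1 ≤ p < ∞, ‖X - Y‖_p ≤ 2^{1/p} · ((e^d - 1)/e^d) · max(‖X‖_p, ‖Y‖_p), where ‖·‖_p is the Schatten p-norm. -/
open Matrix
open scoped ComplexOrder

/-- The `i`-th largest eigenvalue of a Hermitian matrix (eigenvalues in decreasing order). -/
noncomputable def eigDesc {n : ℕ} {A : Matrix (Fin n) (Fin n) ℂ} (hA : A.IsHermitian)
    (i : Fin n) : ℝ :=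
  (hA.eigenvalues ∘ Tuple.sort hA.eigenvalues) i.rev

/-- Schatten p-norm (finite p) of a Hermitian matrix via eigenvalues. -/
noncomputable def schattenNormP {n : ℕ} {A : Matrix (Fin n) (Fin n) ℂ} (hA : A.IsHermitian)
    (p : ℝ) : ℝ :=
  (∑ i, |hA.eigenvalues i| ^ p) ^ (1 / p)

theorem L1 {n : ℕ} (V : Matrix (Fin n) (Fin n) ℂ) (μ : Fin n → ℝ) (i : Fin n) :
    ((Vᴴ * diagonal (Complex.ofReal ∘ μ) * V) i i).re
      = ∑ j, μ j * Complex.normSq (V j i) := by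
  simp only [Matrix.mul_apply, Matrix.diagonal_apply, Function.comp_apply, conjTranspose_apply,
    mul_ite, mul_zero, ite_mul, zero_mul, Finset.sum_ite_eq, Finset.sum_ite_eq', Finset.mem_univ, if_true, Finset.sum_mul]
  rw [Complex.re_sum]
  refine Finset.sum_congr rfl fun j _ => ?_
  rw [show (star (V j i)) * (μ j : ℂ) * V j i = (μ j : ℂ) * (star (V j i) * V j i) by ring,
    Complex.star_def, Complex.conj_mul']
  simp [Complex.normSq_eq_norm_sq, ← Complex.ofReal_pow]

theorem L2 {n : ℕ} (V : Matrix (Fin n) (Fin n) ℂ) (h : star V * V = 1) (i : Fin n) :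
    ∑ j, Complex.normSq (V j i) = 1 := by
  have := congrArg (fun M : Matrix (Fin n) (Fin n) ℂ => (M i i).re) h
  simp only [Matrix.mul_apply, Matrix.one_apply_eq, Matrix.star_apply, Complex.one_re] at this
  rw [Complex.re_sum] at this
  rw [← this]
  refine Finset.sum_congr rfl fun j _ => ?_
  rw [Complex.star_def, Complex.conj_mul']
  simp [Complex.normSq_eq_norm_sq, ← Complex.ofReal_pow]

theorem L3 {n : ℕ} (V : Matrix (Fin n) (Fin n) ℂ) (h : V * star V = 1) (j : Fin n) :
    ∑ i, Complex.normSq (V j i) = 1 := by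
  have := congrArg (fun M : Matrix (Fin n) (Fin n) ℂ => (M j j).re) h
  simp only [Matrix.mul_apply, Matrix.one_apply_eq, Matrix.star_apply, Complex.one_re] at this
  rw [Complex.re_sum] at this
  rw [← this]
  refine Finset.sum_congr rfl fun i _ => ?_
  rw [mul_comm, Complex.star_def, Complex.conj_mul']
  simp [Complex.normSq_eq_norm_sq, ← Complex.ofReal_pow]

theorem L4 {n : ℕ} (μ : Fin n → ℝ) (hμ : ∀ j, 0 ≤ μ j) (V : Matrix (Fin n) (Fin n) ℂ)
    (hc : star V * V = 1) (hr : V * star V = 1) {p : ℝ} (hp : 1 ≤ p) :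
    ∑ i, (∑ j, μ j * Complex.normSq (V j i)) ^ p ≤ ∑ j, μ j ^ p := by
  calc ∑ i, (∑ j, μ j * Complex.normSq (V j i)) ^ p
      ≤ ∑ i, ∑ j, Complex.normSq (V j i) * μ j ^ p := by
        refine Finset.sum_le_sum fun i _ => ?_
        have h1 : ∑ j, μ j * Complex.normSq (V j i)
            = ∑ j, Complex.normSq (V j i) * μ j := by
          simp [mul_comm]
        rw [h1]
        exact Real.rpow_arith_mean_le_arith_mean_rpow Finset.univ
          (fun j => Complex.normSq (V j i)) μ (fun j _ => Complex.normSq_nonneg _)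
          (L2 V hc i) (fun j _ => hμ j) hp
    _ = ∑ j, μ j ^ p := by
        rw [Finset.sum_comm]
        refine Finset.sum_congr rfl fun j _ => ?_
        rw [← Finset.sum_mul, L3 V hr j, one_mul]

theorem L5 {n : ℕ} {X : Matrix (Fin n) (Fin n) ℂ} (hX : X.PosDef)
    (U : Matrix.unitaryGroup (Fin n) ℂ) {p : ℝ} (hp : 1 ≤ p) :
    ∑ i, (((star (U : Matrix (Fin n) (Fin n) ℂ) * X * (U : Matrix (Fin n) (Fin n) ℂ)) i i).re) ^ p
      ≤ ∑ j, |hX.isHermitian.eigenvalues j| ^ p := by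
  set W := (hX.isHermitian.eigenvectorUnitary : Matrix (Fin n) (Fin n) ℂ) with hW
  set U' := (U : Matrix (Fin n) (Fin n) ℂ) with hU'
  set V := star W * U' with hV
  have hWW : W * star W = 1 := Matrix.mem_unitaryGroup_iff.mp hX.isHermitian.eigenvectorUnitary.2
  have hUU : star U' * U' = 1 := Matrix.mem_unitaryGroup_iff'.mp U.2
  have hUU' : U' * star U' = 1 := Matrix.mem_unitaryGroup_iff.mp U.2
  have hWW' : star W * W = 1 := Matrix.mem_unitaryGroup_iff'.mp hX.isHermitian.eigenvectorUnitary.2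
  have hVc : star V * V = 1 := by
    rw [hV, StarMul.star_mul, star_star, mul_assoc, ← mul_assoc W, hWW, one_mul, hUU]
  have hVr : V * star V = 1 := by
    rw [hV, StarMul.star_mul, star_star, mul_assoc, ← mul_assoc U', hUU', one_mul, hWW']
  have key : ∀ i, ((star U' * X * U') i i).re
      = ∑ j, hX.isHermitian.eigenvalues j * Complex.normSq (V j i) := by
    intro i
    have hXs : star U' * X * U' = Vᴴ * diagonal (Complex.ofReal ∘ hX.isHermitian.eigenvalues) * V := by
      conv_lhs => rw [hX.isHermitian.spectral_theorem, Unitary.conjStarAlgAut_apply]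
      rw [← Matrix.star_eq_conjTranspose, hV, StarMul.star_mul, star_star]
      simp only [Matrix.mul_assoc]
      rfl
    rw [hXs, L1]
  simp_rw [key]
  have := L4 hX.isHermitian.eigenvalues (fun j => (hX.eigenvalues_pos j).le) V hVc hVr hp
  refine this.trans (le_of_eq (Finset.sum_congr rfl fun j _ => ?_))
  rw [abs_of_pos (hX.eigenvalues_pos j)]

theorem L0 {n : ℕ} {M : Matrix (Fin n) (Fin n) ℂ} (hM : M.PosSemidef) (i : Fin n) :
    0 ≤ (M i i).re := by
  have := hM.re_dotProduct_nonneg (Pi.single i 1)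
  simpa [dotProduct, Matrix.mulVec, Pi.single_apply, Finset.sum_ite_eq,
    Finset.mul_sum, mul_ite, ite_mul] using this

theorem stmt6 {n : ℕ} {X Y : Matrix (Fin n) (Fin n) ℂ}
    (hX : X.PosDef) (hY : Y.PosDef) (d : ℝ) (hd : 0 ≤ d)
    (h₁ : (Real.exp d • Y - X).PosSemidef) (h₂ : (Real.exp d • X - Y).PosSemidef)
    (p : ℝ) (hp : 1 ≤ p) :
    schattenNormP (hX.isHermitian.sub hY.isHermitian) p ≤
      2 ^ (1 / p) * ((Real.exp d - 1) / Real.exp d) *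
        max (schattenNormP hX.isHermitian p) (schattenNormP hY.isHermitian p) := by
  have hp0 : 0 < p := lt_of_lt_of_le one_pos hp
  set r := Real.exp d with hr
  have hr1 : 1 ≤ r := by rw [hr]; simpa using Real.exp_le_exp.mpr hd -- maybe one_le_exp
  have hr0 : 0 < r := lt_of_lt_of_le one_pos hr1
  set c := (r - 1) / r with hcdef
  have hc : 0 ≤ c := div_nonneg (by linarith) hr0.le
  set hA : (X - Y).IsHermitian := hX.isHermitian.sub hY.isHermitian with hAdef
  set U' := (hA.eigenvectorUnitary : Matrix (Fin n) (Fin n) ℂ) with hU'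
  set qX : Fin n → ℝ := fun i => ((star U' * X * U') i i).re with hqX
  set qY : Fin n → ℝ := fun i => ((star U' * Y * U') i i).re with hqY
  -- eigenvalue as difference of quadratic forms
  have hlam : ∀ i, hA.eigenvalues i = qX i - qY i := by
    intro i
    have h := congrArg (fun M : Matrix (Fin n) (Fin n) ℂ => (M i i).re)
      (by have h0 := hA.conjStarAlgAut_star_eigenvectorUnitary
          simp only [Unitary.conjStarAlgAut_apply, Unitary.coe_star, star_star] at h0
          exact h0)
    simp only [Matrix.mul_sub, Matrix.sub_mul, Matrix.sub_apply, Complex.sub_re,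
      Matrix.diagonal_apply_eq, Function.comp_apply] at h
    have h2 : ((RCLike.ofReal (hA.eigenvalues i) : ℂ)).re = hA.eigenvalues i := by simp
    rw [h2] at h
    rw [hqX, hqY]
    exact h.symm
  -- the Loewner inequalities at the quadratic form level
  have hXY : ∀ i, qX i ≤ r * qY i := by
    intro i
    have hpsd : (star U' * (r • Y - X) * U').PosSemidef := by
      have := h₁.conjTranspose_mul_mul_same U'
      rwa [← Matrix.star_eq_conjTranspose] at this
    have h0 := L0 hpsd i
    simp only [Matrix.mul_sub, Matrix.sub_mul, Matrix.mul_smul, Matrix.smul_mul,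
      Matrix.sub_apply, Matrix.smul_apply, Complex.sub_re, Complex.smul_re,
      smul_eq_mul] at h0
    rw [hqX, hqY]; linarith
  have hYX : ∀ i, qY i ≤ r * qX i := by
    intro i
    have hpsd : (star U' * (r • X - Y) * U').PosSemidef := by
      have := h₂.conjTranspose_mul_mul_same U'
      rwa [← Matrix.star_eq_conjTranspose] at this
    have h0 := L0 hpsd i
    simp only [Matrix.mul_sub, Matrix.sub_mul, Matrix.mul_smul, Matrix.smul_mul,
      Matrix.sub_apply, Matrix.smul_apply, Complex.sub_re, Complex.smul_re,
      smul_eq_mul] at h0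
    rw [hqX, hqY]; linarith
  have hqX0 : ∀ i, 0 ≤ qX i := by
    intro i
    have hpsd : (star U' * X * U').PosSemidef := by
      have := hX.posSemidef.conjTranspose_mul_mul_same U'
      rwa [← Matrix.star_eq_conjTranspose] at this
    exact L0 hpsd i
  have hqY0 : ∀ i, 0 ≤ qY i := by
    intro i
    have hpsd : (star U' * Y * U').PosSemidef := by
      have := hY.posSemidef.conjTranspose_mul_mul_same U'
      rwa [← Matrix.star_eq_conjTranspose] at this
    exact L0 hpsd i
  -- pointwise bound
  have hpt : ∀ i, |hA.eigenvalues i| ^ p ≤ (c * qX i) ^ p + (c * qY i) ^ p := by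
    intro i
    rcases le_total 0 (hA.eigenvalues i) with hpos | hneg
    · have h1 : |hA.eigenvalues i| ≤ c * qX i := by
        rw [abs_of_nonneg hpos, hlam i, hcdef, div_mul_eq_mul_div, le_div_iff₀ hr0]
        have := hXY i
        nlinarith
      have := Real.rpow_le_rpow (abs_nonneg _) h1 hp0.le
      exact this.trans (le_add_of_nonneg_right (Real.rpow_nonneg
        (mul_nonneg hc (hqY0 i)) p))
    · have h1 : |hA.eigenvalues i| ≤ c * qY i := by
        rw [abs_of_nonpos hneg, hlam i, hcdef, div_mul_eq_mul_div, le_div_iff₀ hr0]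
        have := hYX i
        nlinarith
      have := Real.rpow_le_rpow (abs_nonneg _) h1 hp0.le
      exact this.trans (le_add_of_nonneg_left (Real.rpow_nonneg
        (mul_nonneg hc (hqX0 i)) p))
  set SX := ∑ j, |hX.isHermitian.eigenvalues j| ^ p with hSX
  set SY := ∑ j, |hY.isHermitian.eigenvalues j| ^ p with hSY
  have hSX0 : 0 ≤ SX := Finset.sum_nonneg fun j _ => Real.rpow_nonneg (abs_nonneg _) p
  have hSY0 : 0 ≤ SY := Finset.sum_nonneg fun j _ => Real.rpow_nonneg (abs_nonneg _) p
  have hmax0 : 0 ≤ max SX SY := le_trans hSX0 (le_max_left _ _)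
  have hsum : ∑ i, |hA.eigenvalues i| ^ p ≤ c ^ p * (SX + SY) := by
    calc ∑ i, |hA.eigenvalues i| ^ p
        ≤ ∑ i, ((c * qX i) ^ p + (c * qY i) ^ p) := Finset.sum_le_sum fun i _ => hpt i
      _ = c ^ p * ∑ i, qX i ^ p + c ^ p * ∑ i, qY i ^ p := by
          rw [Finset.sum_add_distrib, Finset.mul_sum, Finset.mul_sum]
          congr 1
          · exact Finset.sum_congr rfl fun i _ => Real.mul_rpow hc (hqX0 i)
          · exact Finset.sum_congr rfl fun i _ => Real.mul_rpow hc (hqY0 i)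
      _ ≤ c ^ p * SX + c ^ p * SY := by
          have hcp : 0 ≤ c ^ p := Real.rpow_nonneg hc p
          have hX5 := L5 hX hA.eigenvectorUnitary hp
          have hY5 := L5 hY hA.eigenvectorUnitary hp
          exact add_le_add (mul_le_mul_of_nonneg_left hX5 hcp)
            (mul_le_mul_of_nonneg_left hY5 hcp)
      _ = c ^ p * (SX + SY) := by ring
  have hM : ∑ i, |hA.eigenvalues i| ^ p ≤ 2 * (c ^ p * max SX SY) := by
    refine hsum.trans ?_
    have hcp : 0 ≤ c ^ p := Real.rpow_nonneg hc p
    have : SX + SY ≤ 2 * max SX SY := by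
      have := le_max_left SX SY
      have := le_max_right SX SY
      linarith
    nlinarith
  have hsum0 : 0 ≤ ∑ i, |hA.eigenvalues i| ^ p :=
    Finset.sum_nonneg fun j _ => Real.rpow_nonneg (abs_nonneg _) p
  have final := Real.rpow_le_rpow hsum0 hM (by positivity : (0:ℝ) ≤ 1 / p)
  refine le_trans final ?_
  rw [one_div]
  rw [Real.mul_rpow (by norm_num) (mul_nonneg (Real.rpow_nonneg hc p) hmax0),
    Real.mul_rpow (Real.rpow_nonneg hc p) hmax0,
    Real.rpow_rpow_inv hc (ne_of_gt hp0), mul_assoc]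
  have hmaxle : (max SX SY) ^ p⁻¹ ≤
      max (schattenNormP hX.isHermitian p) (schattenNormP hY.isHermitian p) := by
    rcases max_cases SX SY with ⟨h, _⟩ | ⟨h, _⟩
    · rw [h]
      refine le_max_of_le_left (le_of_eq ?_)
      rw [hSX, schattenNormP, one_div]
    · rw [h]
      refine le_max_of_le_right (le_of_eq ?_)
      rw [hSY, schattenNormP, one_div]
  have h2p : (0:ℝ) ≤ 2 ^ p⁻¹ := Real.rpow_nonneg (by norm_num) _
  exact mul_le_mul_of_nonneg_left (mul_le_mul_of_nonneg_left hmaxle hc) h2p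
end

section
/- Let X and Y be n×n positive definite Hermitian matrices with X ≤ e^d Y and Y ≤ e^d X in the Löwner order for some d ≥ 0. Then the spectral norm (operator norm) satisfies ‖X - Y‖ ≤ ((e^d - 1)/e^d) · max(‖X‖, ‖Y‖). -/
open Matrix
open scoped ComplexOrder

/-- Spectral norm of a Hermitian matrix: maximal absolute value of its eigenvalues. -/
noncomputable def specNorm {n : ℕ} {A : Matrix (Fin n) (Fin n) ℂ} (hA : A.IsHermitian) : ℝ :=
  ⨆ i, |hA.eigenvalues i|

lemma specNorm_nonneg {n : ℕ} {A : Matrix (Fin n) (Fin n) ℂ} (hA : A.IsHermitian) :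
    0 ≤ specNorm hA :=
  Real.iSup_nonneg fun _ => abs_nonneg _

lemma eig_le_specNorm {n : ℕ} {A : Matrix (Fin n) (Fin n) ℂ} (hA : A.IsHermitian) (i : Fin n) :
    |hA.eigenvalues i| ≤ specNorm hA :=
  le_ciSup (f := fun i => |hA.eigenvalues i|) (Set.Finite.bddAbove (Set.finite_range _)) i

lemma spec_smul_sub_posSemidef {n : ℕ} {A : Matrix (Fin n) (Fin n) ℂ} (hA : A.IsHermitian) :
    (((specNorm hA : ℂ)) • (1 : Matrix (Fin n) (Fin n) ℂ) - A).PosSemidef := by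
  have key : ((specNorm hA : ℂ)) • (1 : Matrix (Fin n) (Fin n) ℂ) - A
      = (hA.eigenvectorUnitary : Matrix (Fin n) (Fin n) ℂ) *
        diagonal (fun i => ((specNorm hA : ℂ) - hA.eigenvalues i)) *
        (hA.eigenvectorUnitary : Matrix (Fin n) (Fin n) ℂ)ᴴ := by
    have hU : (hA.eigenvectorUnitary : Matrix (Fin n) (Fin n) ℂ) *
        (hA.eigenvectorUnitary : Matrix (Fin n) (Fin n) ℂ)ᴴ = 1 :=
      Matrix.mem_unitaryGroup_iff.mp hA.eigenvectorUnitary.2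
    have hdiag : diagonal (fun i => ((specNorm hA : ℂ) - hA.eigenvalues i))
        = (specNorm hA : ℂ) • (1 : Matrix (Fin n) (Fin n) ℂ)
          - diagonal (RCLike.ofReal ∘ hA.eigenvalues) := by
      rw [smul_one_eq_diagonal, ← diagonal_sub]
      rfl
    rw [hdiag, Matrix.mul_sub, Matrix.sub_mul, mul_smul_comm, smul_mul_assoc, Matrix.mul_one,
      hU, ← Matrix.star_eq_conjTranspose, ← Unitary.conjStarAlgAut_apply (S := ℂ), ← hA.spectral_theorem]
  rw [key]
  apply PosSemidef.mul_mul_conjTranspose_same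
  refine posSemidef_diagonal_iff.mpr fun i => ?_
  rw [← Complex.ofReal_sub]
  have : hA.eigenvalues i ≤ specNorm hA := (abs_le.mp (eig_le_specNorm hA i)).2
  exact_mod_cast sub_nonneg.mpr this

lemma rayleigh {n : ℕ} {A : Matrix (Fin n) (Fin n) ℂ} (hA : A.IsHermitian) (v : Fin n → ℂ) :
    (star v ⬝ᵥ (A *ᵥ v)).re ≤ specNorm hA * (star v ⬝ᵥ v).re := by
  have h := (spec_smul_sub_posSemidef hA).re_dotProduct_nonneg v
  simp only [sub_mulVec, smul_mulVec, one_mulVec, dotProduct_sub, dotProduct_smul,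
    map_sub, smul_eq_mul, RCLike.re_to_complex, Complex.re_ofReal_mul] at h
  linarith

theorem stmt7 {n : ℕ} {X Y : Matrix (Fin n) (Fin n) ℂ}
    (hX : X.PosDef) (hY : Y.PosDef) (d : ℝ) (hd : 0 ≤ d)
    (h₁ : (Real.exp d • Y - X).PosSemidef) (h₂ : (Real.exp d • X - Y).PosSemidef) :
    specNorm (hX.isHermitian.sub hY.isHermitian) ≤
      (Real.exp d - 1) / Real.exp d *
        max (specNorm hX.isHermitian) (specNorm hY.isHermitian) := by
  have hE0 : (0:ℝ) < Real.exp d := Real.exp_pos d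
  have hE1 : 1 ≤ Real.exp d := Real.one_le_exp hd
  have hm0 : 0 ≤ max (specNorm hX.isHermitian) (specNorm hY.isHermitian) :=
    le_trans (specNorm_nonneg _) (le_max_left _ _)
  have hrhs : 0 ≤ (Real.exp d - 1) / Real.exp d *
      max (specNorm hX.isHermitian) (specNorm hY.isHermitian) :=
    mul_nonneg (div_nonneg (by linarith) hE0.le) hm0
  rw [specNorm]
  refine Real.iSup_le (fun i => ?_) hrhs
  set hM := hX.isHermitian.sub hY.isHermitian with hMdef
  set v : Fin n → ℂ := ⇑(hM.eigenvectorBasis i) with hv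
  have hunit : star v ⬝ᵥ v = 1 := by
    have hn := hM.eigenvectorBasis.orthonormal.1 i
    have h' : star v ⬝ᵥ v = (inner ℂ (hM.eigenvectorBasis i) (hM.eigenvectorBasis i) : ℂ) := by
      rw [EuclideanSpace.inner_eq_star_dotProduct, dotProduct_comm]
    rw [h', inner_self_eq_norm_sq_to_K, hn]
    norm_num
  set a := (star v ⬝ᵥ (X *ᵥ v)).re with ha
  set b := (star v ⬝ᵥ (Y *ᵥ v)).re with hb
  have ha0 : 0 ≤ a := by simpa using hX.posSemidef.re_dotProduct_nonneg v
  have hb0 : 0 ≤ b := by simpa using hY.posSemidef.re_dotProduct_nonneg v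
  have haM : a ≤ max (specNorm hX.isHermitian) (specNorm hY.isHermitian) := by
    have h' := rayleigh hX.isHermitian v
    rw [hunit] at h'
    simp only [Complex.one_re, mul_one] at h'
    exact le_trans h' (le_max_left _ _)
  have hbM : b ≤ max (specNorm hX.isHermitian) (specNorm hY.isHermitian) := by
    have h' := rayleigh hY.isHermitian v
    rw [hunit] at h'
    simp only [Complex.one_re, mul_one] at h'
    exact le_trans h' (le_max_right _ _)
  have hab1 : a ≤ Real.exp d * b := by
    have h' := h₁.re_dotProduct_nonneg v
    simp only [sub_mulVec, smul_mulVec, dotProduct_sub, dotProduct_smul, map_sub,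
      RCLike.smul_re, RCLike.re_to_complex] at h'
    linarith
  have hab2 : b ≤ Real.exp d * a := by
    have h' := h₂.re_dotProduct_nonneg v
    simp only [sub_mulVec, smul_mulVec, dotProduct_sub, dotProduct_smul, map_sub,
      RCLike.smul_re, RCLike.re_to_complex] at h'
    linarith
  have hlam : hM.eigenvalues i = a - b := by
    have h' := hM.eigenvalues_eq i
    simp only [sub_mulVec, dotProduct_sub, map_sub, RCLike.re_to_complex, ← hv] at h'
    exact h'
  rw [hlam, abs_sub_le_iff]
  constructor <;> rw [div_mul_eq_mul_div, le_div_iff₀ hE0] <;> nlinarith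
end

section
/- Let X and Y be n×n real symmetric positive definite matrices and α = e^d ≥ 1 such that αX - Y and αY - X are both positive semidefinite. Then tr((αX - Y)(αY - X)) ≥ 0, and consequently (1 + α²)·‖X - Y‖_F² ≤ (α - 1)²·(‖X‖_F² + ‖Y‖_F²). -/
open Matrix

/-- Squared Frobenius norm of a real matrix. -/
noncomputable def frobSq {n : ℕ} (A : Matrix (Fin n) (Fin n) ℝ) : ℝ :=
  Matrix.trace (Aᵀ * A)

lemma trace_nonneg_of_psd {n : ℕ} {M : Matrix (Fin n) (Fin n) ℝ}
    (h : M.PosSemidef) : 0 ≤ Matrix.trace M := by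
  rw [Matrix.trace]
  apply Finset.sum_nonneg
  intro i _
  have := h.dotProduct_mulVec_nonneg (Pi.single i 1)
  simpa [dotProduct, Matrix.mulVec, Pi.single_apply, Matrix.diag] using this

lemma trace_mul_nonneg_of_psd {n : ℕ} {A B : Matrix (Fin n) (Fin n) ℝ}
    (hA : A.PosSemidef) (hB : B.PosSemidef) : 0 ≤ Matrix.trace (A * B) := by
  open scoped MatrixOrder in
  have hC : (CFC.sqrt B).PosSemidef := (CFC.sqrt_nonneg B).posSemidef
  have hpsd : (CFC.sqrt B * A * (CFC.sqrt B)ᴴ).PosSemidef := hA.mul_mul_conjTranspose_same _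
  rw [hC.1] at hpsd
  open scoped MatrixOrder in
  have : A * B = A * (CFC.sqrt B * CFC.sqrt B) := by rw [CFC.sqrt_mul_sqrt_self B hB.nonneg]
  rw [this, ← mul_assoc, Matrix.trace_mul_comm, ← mul_assoc]
  exact trace_nonneg_of_psd hpsd

theorem stmt11 {n : ℕ} (X Y : Matrix (Fin n) (Fin n) ℝ)
    (hX : X.PosDef) (hY : Y.PosDef) (d : ℝ) (hd : 0 ≤ d)
    (h₁ : (Real.exp d • X - Y).PosSemidef) (h₂ : (Real.exp d • Y - X).PosSemidef) :
    0 ≤ Matrix.trace ((Real.exp d • X - Y) * (Real.exp d • Y - X)) ∧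
      (1 + Real.exp d ^ 2) * frobSq (X - Y) ≤
        (Real.exp d - 1) ^ 2 * (frobSq X + frobSq Y) := by
  set α := Real.exp d with hα
  have hT : 0 ≤ Matrix.trace ((α • X - Y) * (α • Y - X)) :=
    trace_mul_nonneg_of_psd h₁ h₂
  refine ⟨hT, ?_⟩
  have hXt : Xᵀ = X := by
    simpa using hX.1.eq
  have hYt : Yᵀ = Y := by
    simpa using hY.1.eq
  set a := Matrix.trace (X * X) with ha
  set b := Matrix.trace (Y * Y) with hb
  set c := Matrix.trace (X * Y) with hc
  have hcc : Matrix.trace (Y * X) = c := Matrix.trace_mul_comm Y X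
  have hfX : frobSq X = a := by rw [frobSq, hXt]
  have hfY : frobSq Y = b := by rw [frobSq, hYt]
  have hfXY : frobSq (X - Y) = a + b - 2 * c := by
    rw [frobSq, Matrix.transpose_sub, hXt, hYt, sub_mul, mul_sub, mul_sub]
    simp [Matrix.trace_sub, hcc, ← ha, ← hb, ← hc]
    ring
  have hexp : Matrix.trace ((α • X - Y) * (α • Y - X)) =
      α ^ 2 * c - α * a - α * b + c := by
    rw [sub_mul, mul_sub, mul_sub, Matrix.smul_mul, Matrix.mul_smul, Matrix.smul_mul,
      Matrix.mul_smul]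
    simp [Matrix.trace_sub, Matrix.trace_smul, hcc, ← ha, ← hb, ← hc, smul_smul, smul_eq_mul]
    ring
  rw [hfX, hfY, hfXY]
  rw [hexp] at hT
  nlinarith [hT]
end

section
/- Let X and Y be n×n positive definite Hermitian matrices with X ≤ e^d Y and Y ≤ e^d X in the Löwner order for some d ≥ 0. Then ‖X - Y‖_F ≤ ((e^d - 1)/√(e^{2d} + 1)) · √(‖X‖_F² + ‖Y‖_F²). -/
open Matrix
open scoped ComplexOrder

/-- Frobenius norm of a complex matrix. -/
noncomputable def frobNorm {n : ℕ} (A : Matrix (Fin n) (Fin n) ℂ) : ℝ :=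
  Real.sqrt (Matrix.trace (Aᴴ * A)).re

lemma psd_trace_re_nonneg {n : ℕ} {M : Matrix (Fin n) (Fin n) ℂ} (hM : M.PosSemidef) :
    0 ≤ (Matrix.trace M).re := by
  have hdiag : ∀ i, 0 ≤ (M i i).re := by
    intro i
    have := hM.re_dotProduct_nonneg (Pi.single i 1)
    simpa [dotProduct, Matrix.mulVec, Pi.single_apply, Finset.sum_ite_eq] using this
  rw [Matrix.trace, Complex.re_sum]
  exact Finset.sum_nonneg fun i _ => hdiag i

open scoped MatrixOrder in
lemma psd_trace_mul_re_nonneg {n : ℕ} {A B : Matrix (Fin n) (Fin n) ℂ}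
    (hA : A.PosSemidef) (hB : B.PosSemidef) :
    0 ≤ (Matrix.trace (A * B)).re := by
  set S := CFC.sqrt A with hS
  have hs : S * S = A := CFC.sqrt_mul_sqrt_self A hA.nonneg
  have hH : Sᴴ = S := (CFC.sqrt_nonneg A).posSemidef.isHermitian
  have hPSD : (S * B * S).PosSemidef := by
    have := hB.conjTranspose_mul_mul_same S
    rwa [hH] at this
  have htr : Matrix.trace (A * B) = Matrix.trace (S * B * S) := by
    rw [← hs, Matrix.mul_assoc, Matrix.trace_mul_comm S (S * B)]
  rw [htr]
  exact psd_trace_re_nonneg hPSD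

theorem stmt12 {n : ℕ} {X Y : Matrix (Fin n) (Fin n) ℂ}
    (hX : X.PosDef) (hY : Y.PosDef) (d : ℝ) (hd : 0 ≤ d)
    (h₁ : (Real.exp d • Y - X).PosSemidef) (h₂ : (Real.exp d • X - Y).PosSemidef) :
    frobNorm (X - Y) ≤
      (Real.exp d - 1) / Real.sqrt (Real.exp (2 * d) + 1) *
        Real.sqrt (frobNorm X ^ 2 + frobNorm Y ^ 2) := by
  set t : ℝ := Real.exp d with ht
  have ht1 : 1 ≤ t := by rw [ht]; exact Real.one_le_exp hd
  have ht0 : 0 < t := lt_of_lt_of_le one_pos ht1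
  set a : ℝ := (Matrix.trace (X * X)).re with ha
  set b : ℝ := (Matrix.trace (Y * Y)).re with hb
  set c : ℝ := (Matrix.trace (X * Y)).re with hc
  have hXH : Xᴴ = X := hX.isHermitian
  have hYH : Yᴴ = Y := hY.isHermitian
  -- nonnegativity of a, b
  have ha0 : 0 ≤ a := by
    have := psd_trace_re_nonneg (Matrix.posSemidef_conjTranspose_mul_self X)
    rwa [hXH] at this
  have hb0 : 0 ≤ b := by
    have := psd_trace_re_nonneg (Matrix.posSemidef_conjTranspose_mul_self Y)
    rwa [hYH] at this
  -- key inequality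
  have key : 0 ≤ (Matrix.trace ((t • X - Y) * (t • Y - X))).re :=
    psd_trace_mul_re_nonneg h₂ h₁
  have hYX : (Matrix.trace (Y * X)).re = c := by
    rw [hc, Matrix.trace_mul_comm]
  have expand : (Matrix.trace ((t • X - Y) * (t • Y - X))).re
      = t * t * c - t * a - t * b + c := by
    have : (t • X - Y) * (t • Y - X)
        = (t * t) • (X * Y) - t • (X * X) - t • (Y * Y) + Y * X := by
      simp only [Matrix.sub_mul, Matrix.mul_sub, Matrix.smul_mul, Matrix.mul_smul,
        smul_smul]
      module
    rw [this]
    simp only [Matrix.trace_add, Matrix.trace_sub, Matrix.trace_smul, Complex.add_re,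
      Complex.sub_re, Complex.real_smul, Complex.mul_re, Complex.ofReal_re,
      Complex.ofReal_im]
    rw [hYX, ← ha, ← hb, ← hc]
    ring
  have keyin : t * (a + b) ≤ (t * t + 1) * c := by nlinarith [key, expand]
  -- frobNorm identities
  have hfa : frobNorm X ^ 2 = a := by
    rw [frobNorm, hXH, Real.sq_sqrt ha0]
  have hfb : frobNorm Y ^ 2 = b := by
    rw [frobNorm, hYH, Real.sq_sqrt hb0]
  have hdiff : frobNorm (X - Y) = Real.sqrt (a + b - 2 * c) := by
    rw [frobNorm]
    congr 1
    have hsub : (X - Y)ᴴ = X - Y := by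
      rw [Matrix.conjTranspose_sub, hXH, hYH]
    rw [hsub]
    have : (X - Y) * (X - Y) = X * X - X * Y - Y * X + Y * Y := by
      simp only [Matrix.sub_mul, Matrix.mul_sub]; abel
    rw [this]
    simp only [Matrix.trace_add, Matrix.trace_sub, Complex.add_re, Complex.sub_re]
    rw [hYX]; ring
  rw [hdiff, hfa, hfb]
  have hexp2 : Real.exp (2 * d) = t * t := by
    rw [two_mul, Real.exp_add]
  rw [hexp2]
  have hden : (0:ℝ) < t * t + 1 := by positivity
  have hab0 : (0:ℝ) ≤ a + b := by linarith
  have hR0 : 0 ≤ (t - 1) / Real.sqrt (t * t + 1) * Real.sqrt (a + b) :=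
    mul_nonneg (div_nonneg (by linarith) (Real.sqrt_nonneg _)) (Real.sqrt_nonneg _)
  rw [← Real.sqrt_sq hR0]
  apply Real.sqrt_le_sqrt
  have hsq : ((t - 1) / Real.sqrt (t * t + 1) * Real.sqrt (a + b)) ^ 2
      = (t - 1) ^ 2 / (t * t + 1) * (a + b) := by
    rw [mul_pow, div_pow, Real.sq_sqrt hden.le, Real.sq_sqrt hab0]
  rw [hsq, div_mul_eq_mul_div, le_div_iff₀ hden]
  nlinarith [keyin]
end

section
/- Let X and Y be n×n positive definite Hermitian matrices with X ≤ e^d Y and Y ≤ e^d X in the Löwner order for some d ≥ 0. Then ‖X - Y‖_F ≤ √2 · ((e^d - 1)/√(e^{2d} + 1)) · max(‖X‖_F, ‖Y‖_F), and this bound is at most the general bound √2·((e^d - 1)/e^d)·max(‖X‖_F, ‖Y‖_F). -/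
open Matrix
open scoped ComplexOrder

lemma trace_conjT_mul_self_re_nonneg {n : ℕ} (C : Matrix (Fin n) (Fin n) ℂ) :
    0 ≤ ((Cᴴ * C).trace).re := by
  simp only [Matrix.trace, Matrix.diag, Matrix.mul_apply, Matrix.conjTranspose_apply,
    Complex.re_sum]
  apply Finset.sum_nonneg; intro i _
  apply Finset.sum_nonneg; intro j _
  simpa [Complex.mul_re, ← sq] using add_nonneg (sq_nonneg (C j i).re) (sq_nonneg (C j i).im)

open scoped MatrixOrder in
lemma trace_mul_psd_re_nonneg {n : ℕ} {A B : Matrix (Fin n) (Fin n) ℂ}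
    (hA : A.PosSemidef) (hB : B.PosSemidef) : 0 ≤ ((A * B).trace).re := by
  set S := CFC.sqrt A with hSdef
  set T := CFC.sqrt B with hTdef
  have key : (A * B).trace = ((T * S)ᴴ * (T * S)).trace := by
    rw [conjTranspose_mul, (CFC.sqrt_nonneg A).posSemidef.1, (CFC.sqrt_nonneg B).posSemidef.1]
    calc (A * B).trace = (S * S * (T * T)).trace := by rw [CFC.sqrt_mul_sqrt_self A hA.nonneg, CFC.sqrt_mul_sqrt_self B hB.nonneg]
    _ = (S * (S * T * T)).trace := by rw [mul_assoc, mul_assoc]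
    _ = ((S * T * T) * S).trace := (Matrix.trace_mul_comm _ _).symm
    _ = (S * T * (T * S)).trace := by rw [mul_assoc]
  rw [key]; exact trace_conjT_mul_self_re_nonneg _

theorem stmt13 {n : ℕ} {X Y : Matrix (Fin n) (Fin n) ℂ}
    (hX : X.PosDef) (hY : Y.PosDef) (d : ℝ) (hd : 0 ≤ d)
    (h₁ : (Real.exp d • Y - X).PosSemidef) (h₂ : (Real.exp d • X - Y).PosSemidef) :
    frobNorm (X - Y) ≤
        Real.sqrt 2 * ((Real.exp d - 1) / Real.sqrt (Real.exp (2 * d) + 1)) *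
          max (frobNorm X) (frobNorm Y) ∧
      Real.sqrt 2 * ((Real.exp d - 1) / Real.sqrt (Real.exp (2 * d) + 1)) *
          max (frobNorm X) (frobNorm Y) ≤
        Real.sqrt 2 * ((Real.exp d - 1) / Real.exp d) *
          max (frobNorm X) (frobNorm Y) := by
  set e := Real.exp d with he
  clear_value e
  have he1 : 1 ≤ e := he ▸ Real.one_le_exp hd
  have he0 : 0 < e := lt_of_lt_of_le one_pos he1
  have hXH : Xᴴ = X := hX.1
  have hYH : Yᴴ = Y := hY.1
  set a := ((X * X).trace).re with ha
  set b := ((Y * Y).trace).re with hb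
  set c := ((X * Y).trace).re with hc
  have ha0 : 0 ≤ a := by
    have := trace_conjT_mul_self_re_nonneg X; rwa [hXH] at this
  have hb0 : 0 ≤ b := by
    have := trace_conjT_mul_self_re_nonneg Y; rwa [hYH] at this
  -- key trace inequality
  clear_value a b c
  have h3 : 0 ≤ ((e • X - Y) * (e • Y - X)).trace.re := trace_mul_psd_re_nonneg h₂ h₁
  have hexp : ((e • X - Y) * (e • Y - X)).trace.re = e * e * c - e * a - e * b + c := by
    have : (e • X - Y) * (e • Y - X)
        = (e * e) • (X * Y) - e • (X * X) - e • (Y * Y) + Y * X := by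
      simp only [sub_mul, mul_sub, smul_mul_assoc, mul_smul_comm, smul_smul,
        smul_sub, smul_add]
      abel
    rw [this]
    have hYX : (Y * X).trace.re = c := by rw [hc, Matrix.trace_mul_comm]
    simp [Matrix.trace_add, Matrix.trace_sub, Matrix.trace_smul, Complex.smul_re, hYX,
      ← ha, ← hb, ← hc]
  rw [hexp] at h3
  -- frobNorm rewrites
  have hfX : frobNorm X = Real.sqrt a := by rw [frobNorm, hXH, ← ha]
  have hfY : frobNorm Y = Real.sqrt b := by rw [frobNorm, hYH, ← hb]
  have hfXY : frobNorm (X - Y) = Real.sqrt (a + b - 2 * c) := by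
    rw [frobNorm]
    congr 1
    have hH : (X - Y)ᴴ = X - Y := by rw [conjTranspose_sub, hXH, hYH]
    rw [hH]
    have : (X - Y) * (X - Y) = X * X - X * Y - Y * X + Y * Y := by
      rw [sub_mul, mul_sub, mul_sub]; abel
    rw [this]
    have hYX : (Y * X).trace.re = c := by rw [hc, Matrix.trace_mul_comm]
    simp [Matrix.trace_add, Matrix.trace_sub, hYX, ← ha, ← hb, ← hc]
    ring
  set M := max (frobNorm X) (frobNorm Y) with hM
  clear_value M
  have hsa : Real.sqrt a ≤ M := by rw [hM, hfX]; exact le_max_left _ _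
  have hsb : Real.sqrt b ≤ M := by rw [hM, hfY]; exact le_max_right _ _
  have hM0 : 0 ≤ M := le_trans (Real.sqrt_nonneg a) hsa
  have haM : a ≤ M ^ 2 := by nlinarith [Real.sq_sqrt ha0, Real.sqrt_nonneg a]
  have hbM : b ≤ M ^ 2 := by nlinarith [Real.sq_sqrt hb0, Real.sqrt_nonneg b]
  have he2 : Real.exp (2 * d) = e ^ 2 := by
    rw [two_mul, Real.exp_add, he, sq]
  have hden : (0:ℝ) < e ^ 2 + 1 := by positivity
  set R := Real.sqrt 2 * ((e - 1) / Real.sqrt (e ^ 2 + 1)) * M with hR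
  clear_value R
  have hR0 : 0 ≤ R := by
    rw [hR]
    apply mul_nonneg (mul_nonneg (Real.sqrt_nonneg 2) _) hM0
    exact div_nonneg (by linarith) (Real.sqrt_nonneg _)
  have hRsq : R ^ 2 = 2 * ((e - 1) ^ 2 / (e ^ 2 + 1)) * M ^ 2 := by
    rw [hR, mul_pow, mul_pow, div_pow, Real.sq_sqrt (by norm_num : (0:ℝ) ≤ 2),
      Real.sq_sqrt hden.le]
  constructor
  · rw [hfXY, he2, show Real.sqrt 2 * ((e - 1) / Real.sqrt (e ^ 2 + 1)) * M = R from hR.symm]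
    calc Real.sqrt (a + b - 2 * c) ≤ Real.sqrt (R ^ 2) := by
          apply Real.sqrt_le_sqrt
          rw [hRsq]
          rw [show 2 * ((e - 1) ^ 2 / (e ^ 2 + 1)) * M ^ 2
              = 2 * (e - 1) ^ 2 * M ^ 2 / (e ^ 2 + 1) from by ring, le_div_iff₀ hden]
          nlinarith [mul_nonneg (sq_nonneg (e - 1)) (by linarith : (0:ℝ) ≤ 2 * M ^ 2 - a - b)]
      _ = R := Real.sqrt_sq hR0
  · rw [he2]
    have hle : e ≤ Real.sqrt (e ^ 2 + 1) := Real.le_sqrt_of_sq_le (by linarith)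
    have hsc : (e - 1) / Real.sqrt (e ^ 2 + 1) ≤ (e - 1) / e := by
      apply div_le_div_of_nonneg_left (by linarith) he0 hle
    exact mul_le_mul_of_nonneg_right
      (mul_le_mul_of_nonneg_left hsc (Real.sqrt_nonneg 2)) hM0
end
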